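/- The generalized Toffoli gates on n lines (n ≥ 2) generate the full symmetric group on {0,1}^n. -/

import Mathlib

/-- The action of a generalized Toffoli gate with target line `t` and set `S`
of (positive) control lines: flip the target bit iff every control carries 1. -/
def gToffoliFun (n : ℕ) (t : Fin n) (S : Finset (Fin n)) (x : Fin n → Bool) :
    Fin n → Bool :=
  if ∀ j ∈ S, x j = true then Function.update x t (!(x t)) else x

theorem gToffoliFun_involutive (n : ℕ) (t : Fin n) (S : Finset (Fin n))
    (ht : t ∉ S) : Function.Involutive (gToffoliFun n t S) := by
  intro x
  unfold gToffoliFun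
  by_cases h : ∀ j ∈ S, x j = true
  · have h2 : ∀ j ∈ S, Function.update x t (!(x t)) j = true := by
      intro j hj
      rw [Function.update_of_ne (by rintro rfl; exact ht hj)]
      exact h j hj
    simp [if_pos h, if_pos h2, Function.update_idem]
  · simp [if_neg h]

/-- A generalized Toffoli gate as a permutation of `{0,1}ⁿ`. -/
def gToffoliPerm (n : ℕ) (t : Fin n) (S : Finset (Fin n)) (ht : t ∉ S) :
    Equiv.Perm (Fin n → Bool) :=
  (gToffoliFun_involutive n t S ht).toPerm

/-- The set of all generalized Toffoli gates on `n` lines. -/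
def gToffoliSet (n : ℕ) : Set (Equiv.Perm (Fin n → Bool)) :=
  {σ | ∃ t S, ∃ ht : t ∉ S, σ = gToffoliPerm n t S ht}

open Equiv Finset

lemma gToffoliPerm_apply (n t S ht x) : gToffoliPerm n t S ht x = gToffoliFun n t S x := rfl

def flipFun (n : ℕ) (A : Finset (Fin n)) (x : Fin n → Bool) : Fin n → Bool :=
  fun j => if j ∈ A then !x j else x j

lemma flipFun_involutive (n A) : Function.Involutive (flipFun n A) := by
  intro x; funext j; simp only [flipFun]; split <;> simp

def flipPerm (n : ℕ) (A : Finset (Fin n)) : Equiv.Perm (Fin n → Bool) :=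
  (flipFun_involutive n A).toPerm

lemma flipPerm_apply (n A x) : flipPerm n A x = flipFun n A x := rfl

lemma flipPerm_mem (n : ℕ) (A : Finset (Fin n)) :
    flipPerm n A ∈ Subgroup.closure (gToffoliSet n) := by
  induction A using Finset.induction_on with
  | empty =>
      have : flipPerm n ∅ = 1 := by
        ext x j; simp [flipPerm_apply, flipFun]
      rw [this]; exact Subgroup.one_mem _
  | @insert a A ha ih =>
      have key : flipPerm n (insert a A)
          = gToffoliPerm n a ∅ (Finset.notMem_empty a) * flipPerm n A := by
        ext x j
        simp only [Perm.mul_apply, flipPerm_apply, gToffoliPerm_apply, gToffoliFun]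
        rw [if_pos (fun k hk => absurd hk (Finset.notMem_empty k))]
        by_cases hja : j = a
        · subst hja
          rw [Function.update_self]
          simp [flipFun, ha]
        · rw [Function.update_of_ne hja]
          simp only [flipFun, Finset.mem_insert, hja, false_or]
      rw [key]
      exact Subgroup.mul_mem _
        (Subgroup.subset_closure ⟨a, ∅, Finset.notMem_empty a, rfl⟩) ih

lemma topSwap (n : ℕ) (t : Fin n) :
    gToffoliPerm n t (Finset.univ.erase t) (Finset.notMem_erase t _)
      = Equiv.swap (Function.update (fun _ => true) t false) (fun _ => true) := by
  set u : Fin n → Bool := Function.update (fun _ => true) t false with hu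
  refine Equiv.ext fun x => ?_
  simp only [gToffoliPerm_apply, gToffoliFun]
  by_cases h : ∀ j ∈ Finset.univ.erase t, x j = true
  · rw [if_pos h]
    have hx : ∀ j, j ≠ t → x j = true := fun j hj => h j (by simp [hj])
    by_cases hxt : x t = true
    · have : x = fun _ => true := by
        funext j; by_cases hj : j = t
        · subst hj; exact hxt
        · exact hx j hj
      subst this
      rw [Equiv.swap_apply_right]
      funext j
      by_cases hj : j = t
      · subst hj; simp [hu]
      · simp [hu, Function.update_of_ne hj]
    · have hxt' : x t = false := by cases hxt' : x t <;> simp_all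
      have : x = u := by
        funext j; by_cases hj : j = t
        · subst hj; simp [hu, hxt']
        · simp [hu, Function.update_of_ne hj, hx j hj]
      subst this
      rw [Equiv.swap_apply_left]
      funext j
      by_cases hj : j = t
      · subst hj; simp [hu, hxt']
      · simp [hu, Function.update_of_ne hj]
  · rw [if_neg h]
    push_neg at h
    obtain ⟨j, hj, hjx⟩ := h
    have hjt : j ≠ t := (Finset.mem_erase.1 hj).1
    have hxu : x ≠ u := by
      intro hh; rw [hh] at hjx; exact hjx (by simp [hu, Function.update_of_ne hjt])
    have hxv : x ≠ (fun _ => true) := by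
      intro hh; rw [hh] at hjx; exact hjx rfl
    rw [Equiv.swap_apply_of_ne_of_ne hxu hxv]

lemma oneBitSwap_mem (n : ℕ) (x : Fin n → Bool) (t : Fin n) :
    Equiv.swap x (Function.update x t (!(x t))) ∈ Subgroup.closure (gToffoliSet n) := by
  classical
  set A : Finset (Fin n) := (Finset.univ.filter fun j => x j = false).erase t with hA
  have htA : t ∉ A := Finset.notMem_erase _ _
  have hmem : ∀ j, j ∈ A ↔ (j ≠ t ∧ x j = false) := by
    intro j; simp [hA, Finset.mem_erase, and_comm]
  set π := flipPerm n A
  set u : Fin n → Bool := Function.update (fun _ => true) t false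
  have hπu : π u = Function.update x t false := by
    funext j
    simp only [π, flipPerm_apply, flipFun]
    by_cases hj : j = t
    · subst hj
      simp [htA, u]
    · rw [Function.update_of_ne hj]
      have : u j = true := by simp [u, Function.update_of_ne hj]
      rw [this]
      by_cases hjA : j ∈ A
      · simp [hjA, ((hmem j).1 hjA).2]
      · have : x j = true := by
          cases hxj : x j
          · exact absurd ((hmem j).2 ⟨hj, hxj⟩) hjA
          · rfl
        simp [hjA, this]
  have hπv : π (fun _ => true) = Function.update x t true := by
    funext j
    simp only [π, flipPerm_apply, flipFun]
    by_cases hj : j = t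
    · subst hj; simp [htA]
    · rw [Function.update_of_ne hj]
      by_cases hjA : j ∈ A
      · simp [hjA, ((hmem j).1 hjA).2]
      · have : x j = true := by
          cases hxj : x j
          · exact absurd ((hmem j).2 ⟨hj, hxj⟩) hjA
          · rfl
        simp [hjA, this]
  have hconj : Equiv.swap (Function.update x t false) (Function.update x t true)
      ∈ Subgroup.closure (gToffoliSet n) := by
    rw [← hπu, ← hπv, Equiv.swap_apply_apply]
    refine Subgroup.mul_mem _ (Subgroup.mul_mem _ (flipPerm_mem n A) ?_)
      (Subgroup.inv_mem _ (flipPerm_mem n A))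
    rw [← topSwap n t]
    exact Subgroup.subset_closure ⟨t, _, Finset.notMem_erase t _, rfl⟩
  cases hxt : x t
  · have h1 : Function.update x t false = x := by
      rw [← hxt]; exact Function.update_eq_self t x
    rw [Bool.not_false]
    rwa [h1] at hconj
  · have h1 : Function.update x t true = x := by
      rw [← hxt]; exact Function.update_eq_self t x
    rw [Bool.not_true, Equiv.swap_comm]
    rwa [h1] at hconj

lemma bool_ne_iff {a b : Bool} (h : a ≠ b) : b = !a := by
  cases a <;> cases b <;> simp_all

lemma swap_mem (n : ℕ) : ∀ d (x y : Fin n → Bool), x ≠ y →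
    (Finset.univ.filter fun j => x j ≠ y j).card ≤ d →
    Equiv.swap x y ∈ Subgroup.closure (gToffoliSet n) := by
  intro d
  induction d with
  | zero =>
      intro x y hxy hc
      exfalso
      apply hxy
      funext j
      by_contra hj
      have : j ∈ Finset.univ.filter fun j => x j ≠ y j := by simp [hj]
      have := Finset.card_pos.2 ⟨j, this⟩
      omega
  | succ d ih =>
      intro x y hxy hc
      obtain ⟨t, ht⟩ : ∃ t, x t ≠ y t := by
        by_contra h; push_neg at h; exact hxy (funext h)
      set y' := Function.update y t (x t) with hy'
      have hyy' : Equiv.swap y y' ∈ Subgroup.closure (gToffoliSet n) := by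
        have : y' = Function.update y t (!(y t)) := by
          rw [hy', bool_ne_iff (Ne.symm ht)]
        rw [this]
        exact oneBitSwap_mem n y t
      by_cases hxy' : x = y'
      · have hyx : y = Function.update x t (!(x t)) := by
          funext j
          by_cases hj : j = t
          · subst hj
            rw [Function.update_self, ← bool_ne_iff ht]
          · rw [Function.update_of_ne hj]
            have := congrFun hxy' j
            rw [hy', Function.update_of_ne hj] at this
            exact this.symm
        rw [hyx]
        exact oneBitSwap_mem n x t
      · have hsub : (Finset.univ.filter fun j => x j ≠ y' j)
            ⊆ (Finset.univ.filter fun j => x j ≠ y j).erase t := by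
          intro j hj
          simp only [Finset.mem_filter, Finset.mem_univ, true_and] at hj
          have hjt : j ≠ t := by
            rintro rfl
            exact hj (by rw [hy', Function.update_self])
          refine Finset.mem_erase.2 ⟨hjt, ?_⟩
          simp only [Finset.mem_filter, Finset.mem_univ, true_and]
          rwa [hy', Function.update_of_ne hjt] at hj
        have hmemt : t ∈ (Finset.univ.filter fun j => x j ≠ y j) := by simp [ht]
        have hcard : (Finset.univ.filter fun j => x j ≠ y' j).card ≤ d := by
          have h1 := Finset.card_le_card hsub
          have h2 := Finset.card_erase_of_mem hmemt
          omega
        have hx' : Equiv.swap x y' ∈ Subgroup.closure (gToffoliSet n) :=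
          ih x y' hxy' hcard
        have hτx : Equiv.swap y y' x = x :=
          Equiv.swap_apply_of_ne_of_ne hxy hxy'
        have hτy' : Equiv.swap y y' y' = y := Equiv.swap_apply_right y y'
        have : Equiv.swap x y
            = Equiv.swap y y' * Equiv.swap x y' * (Equiv.swap y y')⁻¹ := by
          rw [← Equiv.swap_apply_apply, hτx, hτy']
        rw [this]
        exact Subgroup.mul_mem _ (Subgroup.mul_mem _ hyy' hx') (Subgroup.inv_mem _ hyy')

/-- For `n ≥ 2`, the generalized Toffoli gates on `n` lines generate the full
symmetric group on `{0,1}ⁿ`. -/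
theorem gToffoli_generates (n : ℕ) (hn : 2 ≤ n) :
    Subgroup.closure (gToffoliSet n) = (⊤ : Subgroup (Equiv.Perm (Fin n → Bool))) := by
  rw [eq_top_iff, ← Equiv.Perm.closure_isSwap, Subgroup.closure_le]
  rintro σ ⟨x, y, hxy, rfl⟩
  exact swap_mem n _ x y hxy le_rfl
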